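/- In the Dragonfly algebra over a residuated lattice without zero divisors, for any α ∈ L and β, γ ∈ L* with β ≤_ℓ γ, we have α →_D β ≤_ℓ α →_D γ (the residuum is monotone in the second argument when the first argument is a known value). -/

import Mathlib

/-- A linearly ordered (bounded, integral-scale) residuated lattice:
`⊥` plays the role of `0` and `⊤` the role of `1`. -/
class LinResLat (L : Type*) extends LinearOrder L, BoundedOrder L where
  mul : L → L → L
  imp : L → L → L
  mul_comm : ∀ a b : L, mul a b = mul b a
  mul_assoc : ∀ a b c : L, mul (mul a b) c = mul a (mul b c)
  mul_one : ∀ a : L, mul a ⊤ = a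
  adjoint : ∀ a b c : L, mul a b ≤ c ↔ a ≤ imp b c
  bot_lt_top : (⊥ : L) < ⊤

/-- The Dragonfly carrier `L* = L ∪ {*}`. -/
inductive Dstar (L : Type*) where
  | of : L → Dstar L
  | star : Dstar L

namespace Dstar

variable {L : Type*} [LinResLat L]

/-- Dragonfly multiplication `⊗_D`. -/
def dmul : Dstar L → Dstar L → Dstar L
  | of a, of b => of (LinResLat.mul a b)
  | of a, star => if a = ⊥ then of ⊥ else star
  | star, of b => if b = ⊥ then of ⊥ else star
  | star, star => star

/-- Dragonfly meet `∧_D`. -/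
def dmeet : Dstar L → Dstar L → Dstar L
  | of a, of b => of (a ⊓ b)
  | of a, star => if a = ⊥ then of ⊥ else star
  | star, of b => if b = ⊥ then of ⊥ else star
  | star, star => star

/-- Dragonfly join `∨_D`. -/
def djoin : Dstar L → Dstar L → Dstar L
  | of a, of b => of (a ⊔ b)
  | of a, star => if a = ⊥ then star else of a
  | star, of b => if b = ⊥ then star else of b
  | star, star => star

/-- Dragonfly residuum `→_D`. -/
def dimp : Dstar L → Dstar L → Dstar L
  | of a, of b => of (LinResLat.imp a b)
  | of a, star => if a = ⊥ then of ⊤ else star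
  | star, of b => if b = ⊥ then star else of b
  | star, star => of ⊤

/-- Embedding of `L*` into `Lex (L × Bool)` realizing the linear order `≤_ℓ`
which extends the order of `L` with `0 <_ℓ * <_ℓ α` for all `α ∈ L \ {0}`. -/
def emb : Dstar L → Lex (L × Bool)
  | of a => toLex (a, false)
  | star => toLex ((⊥ : L), true)

theorem emb_injective : Function.Injective (emb (L := L)) := by
  intro x y h
  cases x <;> cases y <;>
    simp only [emb, toLex_inj, Prod.mk.injEq] at h <;> simp_all

/-- The linear order `≤_ℓ` on the Dragonfly algebra. -/
instance : LinearOrder (Dstar L) := LinearOrder.lift' emb emb_injective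

theorem le_def (x y : Dstar L) : x ≤ y ↔ emb x ≤ emb y := Iff.rfl

instance : OrderBot (Dstar L) where
  bot := of ⊥
  bot_le x := by
    cases x with
    | of a => rw [le_def]; simp only [emb, Prod.Lex.le_iff]; exact bot_le.lt_or_eq.imp id (by simp_all)
    | star => rw [le_def]; simp [emb, Prod.Lex.le_iff]
instance : OrderTop (Dstar L) where
  top := of ⊤
  le_top x := by
    cases x with
    | of a => rw [le_def]; simp only [emb, Prod.Lex.le_iff]; exact le_top.lt_or_eq.imp id (by simp_all)
    | star => rw [le_def]; simp only [emb, Prod.Lex.le_iff]; exact Or.inl LinResLat.bot_lt_top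

theorem bot_eq : (⊥ : Dstar L) = of ⊥ := rfl
theorem top_eq : (⊤ : Dstar L) = of ⊤ := rfl

variable {ι : Type*} [Fintype ι] [DecidableEq ι]

/-- The multiplication-based qualitative (DPR) integral on the Dragonfly algebra:
`∫^{⊗_D}_{DPR,μ} f = ⋁_{A ⊆ C} (μ(A) ⊗_D ⋀_{i ∈ A} f_i)`. -/
def integMul (μ : Finset ι → Dstar L) (f : ι → Dstar L) : Dstar L :=
  Finset.univ.powerset.sup fun A => dmul (μ A) (A.inf f)

/-- The conjugate capacity `μ^c(A) = μ(C \ A) →_D 0`. -/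
def conj (μ : Finset ι → Dstar L) (A : Finset ι) : Dstar L :=
  dimp (μ Aᶜ) (of ⊥)

/-- The residuum-based qualitative (DPR) integral on the Dragonfly algebra:
`∫^{→_D}_{DPR,μ} f = ⋀_{A ⊆ C} (μ^c(A) →_D ⋁_{i ∈ A} f_i)`. -/
def integImp (μ : Finset ι → Dstar L) (f : ι → Dstar L) : Dstar L :=
  Finset.univ.powerset.inf fun A => dimp (conj μ A) (A.sup f)

end Dstar

namespace Dstar

variable {L : Type*} [LinResLat L]

theorem of_le_of {a b : L} : (of a : Dstar L) ≤ of b ↔ a ≤ b := by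
  rw [le_def]; simp only [emb, Prod.Lex.le_iff]
  constructor
  · rintro (h | ⟨h, -⟩)
    · exact h.le
    · exact h.le
  · intro h
    rcases h.lt_or_eq with h | h
    · exact Or.inl h
    · exact Or.inr ⟨h, le_rfl⟩

theorem of_le_star {a : L} : (of a : Dstar L) ≤ star ↔ a = ⊥ := by
  rw [le_def]; simp only [emb, Prod.Lex.le_iff]
  constructor
  · rintro (h | ⟨h, -⟩)
    · exact absurd h (not_lt.mpr bot_le)
    · exact h
  · intro h; exact Or.inr ⟨h, by simp⟩

theorem star_le_of {a : L} : (star : Dstar L) ≤ of a ↔ ⊥ < a := by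
  rw [le_def]; simp only [emb, Prod.Lex.le_iff]
  constructor
  · rintro (h | ⟨h, hb⟩)
    · exact h
    · exact absurd hb (by show ¬ (true ≤ false); decide)
  · exact Or.inl

theorem imp_mono {a b c : L} (h : b ≤ c) : LinResLat.imp a b ≤ LinResLat.imp a c := by
  rw [← LinResLat.adjoint]
  exact le_trans ((LinResLat.adjoint _ _ _).mpr le_rfl) h

theorem le_imp_self (a c : L) : c ≤ LinResLat.imp a c := by
  rw [← LinResLat.adjoint]
  have h1 : (⊤ : L) ≤ LinResLat.imp c c := by
    rw [← LinResLat.adjoint, LinResLat.mul_comm, LinResLat.mul_one]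
  calc LinResLat.mul c a = LinResLat.mul a c := LinResLat.mul_comm _ _
    _ ≤ c := (LinResLat.adjoint _ _ _).mpr (le_top.trans h1)

end Dstar

open Dstar in
/-- Over a residuated lattice without zero divisors, for any known value
`α ∈ L` and `β ≤_ℓ γ` in `L*`, we have `α →_D β ≤_ℓ α →_D γ`. -/
theorem dimp_monotone_known_first_arg {L : Type*} [LinResLat L]
    (hnzd : ∀ a b : L, LinResLat.mul a b = ⊥ → a = ⊥ ∨ b = ⊥)
    (a : L) (y z : Dstar L) (hyz : y ≤ z) :
    dimp (Dstar.of a) y ≤ dimp (Dstar.of a) z := by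
  cases y with
  | of b =>
    cases z with
    | of c =>
      rw [of_le_of] at hyz
      simpa [dimp, of_le_of] using imp_mono hyz
    | star =>
      rw [of_le_star] at hyz
      subst hyz
      simp only [dimp]
      by_cases ha : a = ⊥
      · simp only [ha, if_pos rfl, of_le_of]
        exact le_top
      · rw [if_neg ha, of_le_star]
        by_contra hne
        have h1 : LinResLat.mul (LinResLat.imp a ⊥) a = ⊥ :=
          le_bot_iff.mp ((LinResLat.adjoint _ _ _).mpr le_rfl)
        rcases hnzd _ _ h1 with h | h
        · exact hne h
        · exact ha h
  | star =>
    cases z with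
    | of c =>
      rw [star_le_of] at hyz
      have hc : c ≠ ⊥ := fun h => absurd hyz (by simp [h])
      simp only [dimp, if_neg hc]
      by_cases ha : a = ⊥
      · rw [if_pos ha, of_le_of, ha]
        rw [← LinResLat.adjoint, LinResLat.mul_comm, LinResLat.mul_one]
        exact bot_le
      · rw [if_neg ha, star_le_of]
        exact lt_of_lt_of_le hyz (le_imp_self a c)
    | star => exact le_rfl
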